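/- Let A ∈ N be a redundancy-free abstract Swiss cheese with δ₁(A) > 0, set M = μ(A), R = ρ(A), let S̃ be the set of all B ∈ N(M,R) partially above A, and let S₁ = {B ∈ S̃ : δ₁(B) = sup_{C ∈ S̃} δ₁(C)}. If the associated Swiss cheese set X_A has empty interior in ℂ, then every abstract Swiss cheese in S₁ is classical. -/

import Mathlib

open Metric Set Filter Topology ENNReal

noncomputable section

/-- Abstract Swiss cheese space `F = (ℂ × [0,∞))^{ℕ₀}` with the product topology. -/
abbrev ASC := ℕ → ℂ × NNReal

/-- The centre of the `n`-th disk. -/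
def ctr (A : ASC) (n : ℕ) : ℂ := (A n).1

/-- The radius of the `n`-th disk, as a real number. -/
def rad (A : ASC) (n : ℕ) : ℝ := ((A n).2 : ℝ)

/-- The associated Swiss cheese set `X_A`. -/
def Xset (A : ASC) : Set ℂ :=
  closedBall (ctr A 0) (rad A 0) \ ⋃ n : ℕ, ball (ctr A (n + 1)) (rad A (n + 1))

/-- The significant index set `S_A = {n ≥ 1 : r_n > 0}`. -/
def SIdx (A : ASC) : Set ℕ := {n | 1 ≤ n ∧ 0 < rad A n}

/-- The radius sum function `ρ(A) = ∑_{n≥1} r_n`, valued in `[0,∞]`. -/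
def rhoSum (A : ASC) : ℝ≥0∞ := ∑' n : ℕ, ((A (n + 1)).2 : ℝ≥0∞)

/-- The centre bound function `μ(A) = sup_{n≥1} |a_n|`, valued in `[0,∞]`. -/
def muSup (A : ASC) : ℝ≥0∞ := ⨆ n : ℕ, (‖(A (n + 1)).1‖₊ : ℝ≥0∞)

/-- `H_A(E) = {n ∈ S_A : B̄(a_n, r_n) ∩ E ≠ ∅}`. -/
def HIdx (A : ASC) (E : Set ℂ) : Set ℕ :=
  {n | n ∈ SIdx A ∧ (closedBall (ctr A n) (rad A n) ∩ E).Nonempty}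

/-- The local radius sum function `ρ_E(A) = ∑_{n ∈ H_A(E)} r_n`. -/
def rhoLoc (A : ASC) (E : Set ℂ) : ℝ≥0∞ :=
  ∑' n : HIdx A E, ((A (n : ℕ)).2 : ℝ≥0∞)

/-- The discrepancy function of order 1, `δ₁(A) = r_0 − ∑_{n≥1} r_n ∈ [−∞,∞)`. -/
def delta1 (A : ASC) : EReal := (rad A 0 : EReal) - ((rhoSum A : ℝ≥0∞) : EReal)

/-- The discrepancy function of order `α`, `δ_α(A) = r_0^α − ∑_{n≥1} r_n^α ∈ [−∞,∞)`. -/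
def deltaAlpha (α : ℝ) (A : ASC) : EReal :=
  ((((A 0).2 : ℝ≥0∞) ^ α : ℝ≥0∞) : EReal) -
    ((∑' n : ℕ, ((A (n + 1)).2 : ℝ≥0∞) ^ α : ℝ≥0∞) : EReal)

/-- The discrepancy function of order 2. -/
def delta2 (A : ASC) : EReal := deltaAlpha 2 A

/-- `A` is classical. -/
def IsClassicalASC (A : ASC) : Prop :=
  rhoSum A < ⊤ ∧ 0 < rad A 0 ∧
  ∀ k ∈ SIdx A,
    closedBall (ctr A k) (rad A k) ⊆ ball (ctr A 0) (rad A 0) ∧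
    ∀ l ∈ SIdx A, l ≠ k →
      closedBall (ctr A k) (rad A k) ∩ closedBall (ctr A l) (rad A l) = ∅

/-- `A` is semiclassical. -/
def IsSemiclassicalASC (A : ASC) : Prop :=
  rhoSum A < ⊤ ∧ 0 < rad A 0 ∧
  ∀ k ∈ SIdx A,
    ball (ctr A k) (rad A k) ⊆ ball (ctr A 0) (rad A 0) ∧
    ∀ l ∈ SIdx A, l ≠ k →
      ball (ctr A k) (rad A k) ∩ ball (ctr A l) (rad A l) = ∅

/-- Membership in `N`: finite radius sum and `(r_n)_{n≥1}` non-increasing. -/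
def memN (A : ASC) : Prop :=
  rhoSum A < ⊤ ∧ ∀ n : ℕ, 1 ≤ n → (A (n + 1)).2 ≤ (A n).2

/-- Membership in `N(M,R)`. -/
def memNMR (M R : ℝ≥0∞) (A : ASC) : Prop := memN A ∧ muSup A ≤ M ∧ rhoSum A ≤ R

/-- `A` is redundancy-free. -/
def RedundancyFree (A : ASC) : Prop :=
  ∀ k ∈ SIdx A,
    (ball (ctr A k) (rad A k) ∩ closedBall (ctr A 0) (rad A 0)).Nonempty ∧
    ∀ l ∈ SIdx A, l ≠ k → ¬ ball (ctr A k) (rad A k) ⊆ ball (ctr A l) (rad A l)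

/-- `B` is partially above `A`. -/
def PartiallyAbove (B A : ASC) : Prop :=
  closedBall (ctr B 0) (rad B 0) ⊆ closedBall (ctr A 0) (rad A 0) ∧
  ∀ n : ℕ, 1 ≤ n →
    ball (ctr A n) (rad A n) ⊆ (closedBall (ctr B 0) (rad B 0))ᶜ ∨
    ∃ m : ℕ, 1 ≤ m ∧ ball (ctr A n) (rad A n) ⊆ ball (ctr B m) (rad B m)

/-- The set `S̃` of all `B ∈ N(μ(A), ρ(A))` partially above `A`. -/
def Stilde (A : ASC) : Set ASC :=
  {B | memNMR (muSup A) (rhoSum A) B ∧ PartiallyAbove B A}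

/-- `S₁`: the elements of `S̃` on which `δ₁` attains its supremum over `S̃`. -/
def S1 (A : ASC) : Set ASC :=
  {B ∈ Stilde A | delta1 B = sSup (delta1 '' Stilde A)}

/-- `S₂`: the elements of `S₁` on which `δ₂` attains its infimum over `S₁`. -/
def S2 (A : ASC) : Set ASC :=
  {B ∈ S1 A | delta2 B = sInf (delta2 '' S1 A)}

/-- The (classical) error set `E(A)`. -/
def errSet (A : ASC) : Set ℂ :=
  (⋃ m ∈ SIdx A, ⋃ n ∈ SIdx A, ⋃ (_ : m ≠ n),
    closedBall (ctr A m) (rad A m) ∩ closedBall (ctr A n) (rad A n)) ∪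
  ⋃ n ∈ SIdx A, (ball (ctr A 0) (rad A 0))ᶜ ∩ closedBall (ctr A n) (rad A n)

/-- `V(C) = ⋃_{n∈I} U_n`. -/
def VC (I : Set ℕ) (U : ℕ → Set ℂ) : Set ℂ := ⋃ n ∈ I, U n

/-- `F(C) = ⋃_{n∈I} K_n`. -/
def FC (I : Set ℕ) (K : ℕ → Set ℂ) : Set ℂ := ⋃ n ∈ I, K n

/-- The set `L_A(C)` for a controlling collection `C = ((K_n, U_n))_{n∈I}`. -/
def LSet (A : ASC) (I : Set ℕ) (K U : ℕ → Set ℂ) : Set ASC :=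
  {B | memNMR (muSup A) (rhoSum A) B ∧
    (∀ n ∈ I, rhoLoc B (U n) ≤ rhoLoc A (U n)) ∧
    closedBall (ctr B 0) (rad B 0) = closedBall (ctr A 0) (rad A 0) ∧
    (∀ k ∈ SIdx A, closedBall (ctr A k) (rad A k) ∩ VC I U = ∅ →
      ∃ l ∈ SIdx B, ball (ctr B l) (rad B l) = ball (ctr A k) (rad A k)) ∧
    (∀ n ∈ I, ∀ k ∈ SIdx A, (closedBall (ctr A k) (rad A k) ∩ U n).Nonempty →
      (∃ l ∈ SIdx B, ball (ctr B l) (rad B l) = ball (ctr A k) (rad A k)) ∨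
      (∃ l ∈ HIdx B (K n), ball (ctr A k) (rad A k) ⊆ ball (ctr B l) (rad B l)))}

/-- `A` is annular: `a_0 = a_1` and `0 < r_1 < r_0`. -/
def Annular (A : ASC) : Prop := ctr A 0 = ctr A 1 ∧ 0 < rad A 1 ∧ rad A 1 < rad A 0

/-- The annular radius sum `ρ_a(A) = ∑_{n≥2} r_n`. -/
def rhoAnn (A : ASC) : ℝ≥0∞ := ∑' n : ℕ, ((A (n + 2)).2 : ℝ≥0∞)

/-- The annular discrepancy `δ_a(A) = r_0 − r_1 − 2ρ_a(A)`. -/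
def deltaAnn (A : ASC) : EReal :=
  ((rad A 0 - rad A 1 : ℝ) : EReal) - ((2 * rhoAnn A : ℝ≥0∞) : EReal)

/-- The family `Ã` of Lemma 6.4 / Theorem 6.6 (annular classicalisation). -/
def ATilde (A : ASC) : Set ASC :=
  {B | (∀ n : ℕ, 2 ≤ n → (B (n + 1)).2 ≤ (B n).2) ∧
    rhoAnn B ≤ rhoAnn A ∧ muSup B ≤ muSup A ∧ PartiallyAbove B A ∧
    ctr B 0 = ctr A 0 ∧ ctr B 1 = ctr A 0 ∧
    rad A 1 ≤ rad B 1 ∧ rad B 1 ≤ rad B 0 ∧ rad B 0 ≤ rad A 0}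


/-- skip function: enumerates `ℕ \ {j}` increasingly. -/
def skipF (j n : ℕ) : ℕ := if n < j then n else n + 1

lemma skipF_ne (j n : ℕ) : skipF j n ≠ j := by unfold skipF; split <;> omega

lemma skipF_inj (j : ℕ) : Function.Injective (skipF j) := by
  intro a b h; unfold skipF at h; split at h <;> split at h <;> omega

lemma skipF_range (j m : ℕ) (hm : m ≠ j) : ∃ n, skipF j n = m := by
  rcases lt_or_gt_of_ne hm with h | h
  · exact ⟨m, if_pos h⟩
  · exact ⟨m - 1, by unfold skipF; split <;> omega⟩

lemma tsum_skip (f : ℕ → ℝ≥0∞) (j : ℕ) : ∑' n, f (skipF j n) + f j = ∑' n, f n := by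
  classical
  have h1 : ∑' n, f n = f j + ∑' x, ite (x = j) 0 (f x) := by
    rw [ENNReal.tsum_eq_add_tsum_ite j]
    congr 1
    exact tsum_congr fun x => by by_cases h : x = j <;> simp [h]
  have h2 : ∑' n, f (skipF j n) = ∑' x, ite (x = j) 0 (f x) := by
    have := Function.Injective.tsum_eq (f := fun x => ite (x = j) 0 (f x)) (skipF_inj j) ?_
    · rw [← this]
      exact tsum_congr fun n => by rw [if_neg (skipF_ne j n)]
    · intro x hx
      rw [Function.mem_support] at hx
      have hxj : x ≠ j := fun h => hx (if_pos h)
      exact skipF_range j x hxj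
  rw [h2, h1, add_comm]

lemma rad_nonneg (B : ASC) (n : ℕ) : 0 ≤ rad B n := (B n).2.2

/-- real version of delta1 for finite rhoSum -/
lemma delta1_coe (B : ASC) (h : rhoSum B ≠ ⊤) :
    delta1 B = ((rad B 0 - (rhoSum B).toReal : ℝ) : EReal) := by
  unfold delta1
  lift rhoSum B to NNReal using h with x
  rw [show ((x : ℝ≥0∞) : EReal) = ((x : ℝ) : EReal) from rfl]
  rw [show ((x : ℝ≥0∞).toReal) = (x : ℝ) by simp]
  exact (EReal.coe_sub _ _).symm

lemma delta1_lt_delta1 (B C : ASC) (hB : rhoSum B ≠ ⊤) (hC : rhoSum C ≠ ⊤)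
    (h : rad B 0 - (rhoSum B).toReal < rad C 0 - (rhoSum C).toReal) :
    delta1 B < delta1 C := by
  rw [delta1_coe B hB, delta1_coe C hC]; exact_mod_cast h

lemma delta1_pos_real (B : ASC) (hB : rhoSum B ≠ ⊤) (h : 0 < delta1 B) :
    0 < rad B 0 - (rhoSum B).toReal := by
  rw [delta1_coe B hB] at h; exact_mod_cast h

/-- a single radius is at most the total -/
lemma rad_le_rho (B : ASC) (j : ℕ) (hj : 1 ≤ j) (h : rhoSum B ≠ ⊤) :
    rad B j ≤ (rhoSum B).toReal := by
  have h1 : ((B j).2 : ℝ≥0∞) ≤ rhoSum B := by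
    have := ENNReal.le_tsum (f := fun n => ((B (n + 1)).2 : ℝ≥0∞)) (j - 1)
    simpa [Nat.sub_add_cancel hj, rhoSum] using this
  have := ENNReal.toReal_mono h h1
  simpa [rad] using this

lemma Xset_subset (B A : ASC) (h : PartiallyAbove B A) : Xset B ⊆ Xset A := by
  rintro x ⟨hx1, hx2⟩
  refine ⟨h.1 hx1, ?_⟩
  intro hx
  simp only [Set.mem_iUnion] at hx
  obtain ⟨n, hn⟩ := hx
  rcases h.2 (n + 1) (by omega) with hc | ⟨m, hm, hsub⟩
  · exact (hc hn) hx1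
  · refine hx2 ?_
    simp only [Set.mem_iUnion]
    exact ⟨m - 1, by rw [Nat.sub_add_cancel hm]; exact hsub hn⟩

lemma mem_Stilde_self (A : ASC) (hN : memN A) : A ∈ Stilde A :=
  ⟨⟨hN, le_rfl, le_rfl⟩, subset_rfl, fun n hn => Or.inr ⟨n, hn, subset_rfl⟩⟩

lemma Stilde_rho_ne_top (A B : ASC) (hB : B ∈ Stilde A) : rhoSum B ≠ ⊤ :=
  hB.1.1.1.ne

lemma center_le_muSup (B : ASC) (m : ℕ) (hm : 1 ≤ m) :
    (‖(B m).1‖₊ : ℝ≥0∞) ≤ muSup B := by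
  have := le_iSup (fun n => (‖(B (n + 1)).1‖₊ : ℝ≥0∞)) (m - 1)
  rwa [Nat.sub_add_cancel hm] at this

lemma delASC_spec (A B : ASC) (hB : B ∈ Stilde A) (k : ℕ) (hk : 1 ≤ k)
    (c0 : ℂ) (r0' : NNReal)
    (hsub : closedBall c0 (r0' : ℝ) ⊆ closedBall (ctr B 0) (rad B 0))
    (hopt : ball (ctr B k) (rad B k) ∩ closedBall c0 (r0' : ℝ) = ∅ ∨
      ∃ m, 1 ≤ m ∧ m ≠ k ∧ ball (ctr B k) (rad B k) ⊆ ball (ctr B m) (rad B m)) :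
    ∃ B', B' ∈ Stilde A ∧ B' 0 = (c0, r0') ∧
      rhoSum B' + ((B k).2 : ℝ≥0∞) = rhoSum B ∧
      ∀ m, 1 ≤ m → m ≠ k → ∃ m', 1 ≤ m' ∧ B' m' = B m := by
  classical
  set B' : ASC := fun n => if n = 0 then (c0, r0') else if n < k then B n else B (n + 1)
    with hB'def
  have fact0 : B' 0 = (c0, r0') := by simp [hB'def]
  have factlt : ∀ n, 1 ≤ n → n < k → B' n = B n := by
    intro n h1 h2; simp only [hB'def]; rw [if_neg (by omega), if_pos h2]
  have factge : ∀ n, k ≤ n → B' n = B (n + 1) := by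
    intro n h1; simp only [hB'def]; rw [if_neg (by omega), if_neg (by omega)]
  have corresp : ∀ m, 1 ≤ m → m ≠ k → ∃ m', 1 ≤ m' ∧ B' m' = B m := by
    intro m hm hmk
    rcases lt_or_gt_of_ne hmk with h | h
    · exact ⟨m, hm, factlt m hm h⟩
    · refine ⟨m - 1, by omega, ?_⟩
      rw [factge (m - 1) (by omega), Nat.sub_add_cancel (by omega)]
  have hrho : rhoSum B' + ((B k).2 : ℝ≥0∞) = rhoSum B := by
    have hfun : ∀ n, ((B' (n + 1)).2 : ℝ≥0∞) =
        (fun n => ((B (n + 1)).2 : ℝ≥0∞)) (skipF (k - 1) n) := by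
      intro n
      by_cases h : n + 1 < k
      · rw [factlt (n + 1) (by omega) h]
        simp only [skipF, if_pos (by omega : n < k - 1)]
      · rw [factge (n + 1) (by omega)]
        simp only [skipF, if_neg (by omega : ¬ n < k - 1)]
    have := tsum_skip (fun n => ((B (n + 1)).2 : ℝ≥0∞)) (k - 1)
    rw [Nat.sub_add_cancel hk] at this
    rw [show rhoSum B' = ∑' n, (fun n => ((B (n + 1)).2 : ℝ≥0∞)) (skipF (k - 1) n) from
      tsum_congr hfun]
    exact this
  have hrhole : rhoSum B' ≤ rhoSum B := hrho ▸ self_le_add_right _ _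
  have houter : closedBall (ctr B' 0) (rad B' 0) = closedBall c0 (r0' : ℝ) := by
    rw [show ctr B' 0 = c0 from congrArg Prod.fst fact0,
      show rad B' 0 = (r0' : ℝ) from congrArg (fun p => ((p.2 : ℝ) : ℝ)) fact0]
  refine ⟨B', ⟨⟨⟨lt_of_le_of_lt hrhole hB.1.1.1, ?_⟩, ?_, le_trans hrhole hB.1.2.2⟩, ?_, ?_⟩,
    fact0, hrho, corresp⟩
  · -- monotone radii
    intro n hn
    by_cases h1 : n + 1 < k
    · rw [factlt (n + 1) (by omega) h1, factlt n (by omega) (by omega)]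
      exact hB.1.1.2 n hn
    · by_cases h2 : n < k
      · -- n + 1 = k
        rw [factge (n + 1) (by omega), factlt n (by omega) h2]
        calc (B (n + 2)).2 ≤ (B (n + 1)).2 := hB.1.1.2 (n + 1) (by omega)
          _ ≤ (B n).2 := hB.1.1.2 n hn
      · rw [factge (n + 1) (by omega), factge n (by omega)]
        exact hB.1.1.2 (n + 1) (by omega)
  · -- muSup
    refine iSup_le fun n => ?_
    by_cases h1 : n + 1 < k
    · rw [factlt (n + 1) (by omega) h1]
      exact (center_le_muSup B (n + 1) (by omega)).trans hB.1.2.1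
    · rw [factge (n + 1) (by omega)]
      exact (center_le_muSup B (n + 2) (by omega)).trans hB.1.2.1
  · -- partially above, outer
    rw [houter]; exact hsub.trans hB.2.1
  · -- partially above, balls
    intro n hn
    rcases hB.2.2 n hn with hc | ⟨m, hm, hss⟩
    · left; rw [houter]
      exact hc.trans (Set.compl_subset_compl.2 hsub)
    · by_cases hmk : m = k
      · subst hmk
        rcases hopt with h0 | ⟨m2, hm2, hm2k, hss2⟩
        · left; rw [houter]
          intro x hx hx2
          exact Set.eq_empty_iff_forall_notMem.1 h0 x ⟨hss hx, hx2⟩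
        · obtain ⟨m', hm', hBm'⟩ := corresp m2 hm2 hm2k
          right
          refine ⟨m', hm', ?_⟩
          rw [show ctr B' m' = ctr B m2 from congrArg Prod.fst hBm',
            show rad B' m' = rad B m2 from congrArg (fun p => ((p.2 : ℝ))) hBm']
          exact hss.trans hss2
      · obtain ⟨m', hm', hBm'⟩ := corresp m hm hmk
        right
        refine ⟨m', hm', ?_⟩
        rw [show ctr B' m' = ctr B m from congrArg Prod.fst hBm',
          show rad B' m' = rad B m from congrArg (fun p => ((p.2 : ℝ))) hBm']
        exact hss

lemma radii_mono (B : ASC) (h : ∀ n, 1 ≤ n → (B (n + 1)).2 ≤ (B n).2) (a b : ℕ)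
    (ha : 1 ≤ a) (hab : a ≤ b) : (B b).2 ≤ (B a).2 := by
  induction b, hab using Nat.le_induction with
  | base => exact le_rfl
  | succ n hn ih => exact le_trans (h n (le_trans ha hn)) ih

lemma combASC_spec (A B : ASC) (hB : B ∈ Stilde A) (k l : ℕ) (hk : 1 ≤ k) (hkl : k < l)
    (c : ℂ) (r' : NNReal)
    (hmaxk : (B k).2 ≤ r') (hmaxl : (B l).2 ≤ r')
    (hsum : r' ≤ (B k).2 + (B l).2)
    (hinck : ball (ctr B k) (rad B k) ⊆ ball c (r' : ℝ))
    (hincl : ball (ctr B l) (rad B l) ⊆ ball c (r' : ℝ))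
    (hnorm : (‖c‖₊ : ℝ≥0∞) ≤ muSup A) :
    ∃ B', B' ∈ Stilde A ∧ B' 0 = B 0 ∧
      rhoSum B' + ((B k).2 : ℝ≥0∞) + ((B l).2 : ℝ≥0∞) = rhoSum B + (r' : ℝ≥0∞) ∧
      ∃ p, 1 ≤ p ∧ B' p = (c, r') ∧
        ∀ m, 1 ≤ m → m ≠ k → m ≠ l → ∃ m', 1 ≤ m' ∧ m' ≠ p ∧ B' m' = B m := by
  classical
  have hmono := hB.1.1.2
  have M := radii_mono B hmono
  have hPk : 1 ≤ k ∧ (B k).2 ≤ r' := ⟨hk, hmaxk⟩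
  set p := Nat.find (⟨k, hPk⟩ : ∃ n, 1 ≤ n ∧ (B n).2 ≤ r') with hpdef
  have hpspec : 1 ≤ p ∧ (B p).2 ≤ r' := Nat.find_spec (⟨k, hPk⟩ : ∃ n, 1 ≤ n ∧ (B n).2 ≤ r')
  have hp1 : 1 ≤ p := hpspec.1
  have hpk : p ≤ k := Nat.find_le hPk
  have hplt : ∀ n, 1 ≤ n → n < p → r' < (B n).2 := by
    intro n h1 h2
    have := Nat.find_min (⟨k, hPk⟩ : ∃ n, 1 ≤ n ∧ (B n).2 ≤ r') h2
    simp only [not_and, not_le] at this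
    exact this h1
  set B' : ASC := fun n => if n = 0 then B 0 else if n < p then B n else if n = p then (c, r')
    else if n ≤ k then B (n - 1) else if n < l then B n else B (n + 1) with hB'def
  have f0 : B' 0 = B 0 := by simp [hB'def]
  have f1 : ∀ n, 1 ≤ n → n < p → B' n = B n := by
    intro n h1 h2; simp only [hB'def]; rw [if_neg (by omega), if_pos h2]
  have fp : B' p = (c, r') := by
    simp only [hB'def]; rw [if_neg (by omega), if_neg (by omega)]; simp
  have f2 : ∀ n, p < n → n ≤ k → B' n = B (n - 1) := by
    intro n h1 h2; simp only [hB'def]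
    rw [if_neg (by omega), if_neg (by omega), if_neg (by omega), if_pos h2]
  have f3 : ∀ n, k < n → n < l → B' n = B n := by
    intro n h1 h2; simp only [hB'def]
    rw [if_neg (by omega), if_neg (by omega), if_neg (by omega), if_neg (by omega), if_pos h2]
  have f4 : ∀ n, l ≤ n → B' n = B (n + 1) := by
    intro n h1; simp only [hB'def]
    rw [if_neg (by omega), if_neg (by omega), if_neg (by omega), if_neg (by omega),
      if_neg (by omega)]
  have corresp : ∀ m, 1 ≤ m → m ≠ k → m ≠ l → ∃ m', 1 ≤ m' ∧ m' ≠ p ∧ B' m' = B m := by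
    intro m hm hmk hml
    by_cases h1 : m < p
    · exact ⟨m, hm, by omega, f1 m hm h1⟩
    · by_cases h2 : m < k
      · exact ⟨m + 1, by omega, by omega, by rw [f2 (m + 1) (by omega) (by omega)]; simp⟩
      · by_cases h3 : m < l
        · exact ⟨m, hm, by omega, f3 m (by omega) h3⟩
        · refine ⟨m - 1, by omega, by omega, ?_⟩
          rw [f4 (m - 1) (by omega), Nat.sub_add_cancel (by omega)]
  -- rhoSum computation
  have hrho : rhoSum B' + ((B k).2 : ℝ≥0∞) + ((B l).2 : ℝ≥0∞) = rhoSum B + (r' : ℝ≥0∞) := by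
    set f : ℕ → ℝ≥0∞ := fun n => ((B (n + 1)).2 : ℝ≥0∞) with hfdef
    set F : ℕ → ℝ≥0∞ := fun n => ((B' (n + 1)).2 : ℝ≥0∞) with hFdef
    have hfun : ∀ n, F (skipF (p - 1) n) = f (skipF (l - 1) (skipF (k - 1) n)) := by
      intro n
      by_cases h1 : n < p - 1
      · simp only [skipF, if_pos h1, if_pos (by omega : n < k - 1),
          if_pos (by omega : n < l - 1), hFdef, hfdef]
        rw [f1 (n + 1) (by omega) (by omega)]
      · simp only [skipF, if_neg h1, hFdef, hfdef]
        by_cases h2 : n + 2 ≤ k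
        · simp only [if_pos (by omega : n < k - 1), if_pos (by omega : n < l - 1)]
          rw [f2 (n + 1 + 1) (by omega) (by omega)]
          simp
        · simp only [if_neg (by omega : ¬ n < k - 1)]
          by_cases h3 : n + 2 < l
          · rw [if_pos (by omega : n + 1 < l - 1), f3 (n + 1 + 1) (by omega) (by omega)]
          · rw [if_neg (by omega : ¬ n + 1 < l - 1), f4 (n + 1 + 1) (by omega)]
    have t1 := tsum_skip F (p - 1)
    have t2 := tsum_skip (fun n => f (skipF (l - 1) n)) (k - 1)
    have t3 := tsum_skip f (l - 1)
    have hFp : F (p - 1) = (r' : ℝ≥0∞) := by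
      simp only [hFdef]
      rw [Nat.sub_add_cancel hp1, fp]
    have hfk : f (skipF (l - 1) (k - 1)) = ((B k).2 : ℝ≥0∞) := by
      simp only [skipF, if_pos (by omega : k - 1 < l - 1), hfdef]
      rw [Nat.sub_add_cancel hk]
    have hfl : f (l - 1) = ((B l).2 : ℝ≥0∞) := by
      simp only [hfdef]; rw [Nat.sub_add_cancel (by omega : 1 ≤ l)]
    have hFs : ∑' n, F (skipF (p - 1) n) = ∑' n, f (skipF (l - 1) (skipF (k - 1) n)) :=
      tsum_congr hfun
    have hrB' : rhoSum B' = ∑' n, F n := rfl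
    have hrB : rhoSum B = ∑' n, f n := rfl
    rw [hrB', hrB, ← t1, hFs, hFp, ← t3, hfl, ← t2, hfk]
    ring
  have hrhole : rhoSum B' ≤ rhoSum B := by
    have hcast : (r' : ℝ≥0∞) ≤ ((B k).2 : ℝ≥0∞) + ((B l).2 : ℝ≥0∞) := by
      exact_mod_cast hsum
    have h1 : rhoSum B' + (((B k).2 : ℝ≥0∞) + ((B l).2 : ℝ≥0∞))
        ≤ rhoSum B + (((B k).2 : ℝ≥0∞) + ((B l).2 : ℝ≥0∞)) := by
      rw [← add_assoc, hrho]
      exact add_le_add_right hcast _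
    exact (ENNReal.add_le_add_iff_right (by simp)).1 h1
  have houterc : ctr B' 0 = ctr B 0 := congrArg Prod.fst f0
  have houterr : rad B' 0 = rad B 0 := congrArg (fun q => ((q.2 : ℝ))) f0
  have hctrp : ctr B' p = c := congrArg Prod.fst fp
  have hradp : rad B' p = (r' : ℝ) := congrArg (fun q => ((q.2 : ℝ))) fp
  refine ⟨B', ⟨⟨⟨lt_of_le_of_lt hrhole hB.1.1.1, ?_⟩, ?_, le_trans hrhole hB.1.2.2⟩, ?_, ?_⟩,
    f0, hrho, p, hp1, fp, corresp⟩
  · -- monotone radii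
    intro n hn
    by_cases h1 : n + 1 < p
    · rw [f1 (n + 1) (by omega) h1, f1 n (by omega) (by omega)]
      exact hmono n hn
    · by_cases h2 : n + 1 = p
      · rw [h2, fp, f1 n (by omega) (by omega)]
        exact (hplt n (by omega) (by omega)).le
      · by_cases h3 : n = p
        · -- n = p
          by_cases h4 : n + 1 ≤ k
          · rw [f2 (n + 1) (by omega) h4, h3, fp]
            simpa using hpspec.2
          · -- p = k here
            have hpk' : p = k := by omega
            by_cases h5 : n + 1 < l
            · rw [f3 (n + 1) (by omega) h5, h3, fp]
              calc (B (p + 1)).2 ≤ (B p).2 := hmono p (by omega)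
                _ = (B k).2 := by rw [hpk']
                _ ≤ r' := hmaxk
            · have hl' : p + 1 = l := by omega
              rw [f4 (n + 1) (by omega), h3, fp]
              calc (B (p + 1 + 1)).2 ≤ (B (p + 1)).2 := hmono (p + 1) (by omega)
                _ = (B l).2 := by rw [hl']
                _ ≤ r' := hmaxl
        · -- p < n
          by_cases h4 : n + 1 ≤ k
          · rw [f2 (n + 1) (by omega) h4, f2 n (by omega) (by omega)]
            simp only [Nat.add_sub_cancel]
            exact M (n - 1) n (by omega) (by omega)
          · by_cases h5 : n ≤ k
            · -- n = k, n+1 > k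
              have hnk : n = k := by omega
              rw [f2 n (by omega) h5]
              by_cases h6 : n + 1 < l
              · rw [f3 (n + 1) (by omega) h6]
                exact M (n - 1) (n + 1) (by omega) (by omega)
              · rw [f4 (n + 1) (by omega)]
                exact M (n - 1) (n + 1 + 1) (by omega) (by omega)
            · by_cases h6 : n + 1 < l
              · rw [f3 (n + 1) (by omega) h6, f3 n (by omega) (by omega)]
                exact hmono n hn
              · by_cases h7 : n < l
                · rw [f4 (n + 1) (by omega), f3 n (by omega) h7]
                  exact M n (n + 1 + 1) (by omega) (by omega)
                · rw [f4 (n + 1) (by omega), f4 n (by omega)]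
                  exact hmono (n + 1) (by omega)
  · -- muSup
    refine iSup_le fun n => ?_
    by_cases h1 : n + 1 < p
    · rw [f1 (n + 1) (by omega) h1]
      exact (center_le_muSup B (n + 1) (by omega)).trans hB.1.2.1
    · by_cases h2 : n + 1 = p
      · rw [h2, fp]; exact hnorm
      · by_cases h3 : n + 1 ≤ k
        · rw [f2 (n + 1) (by omega) h3]
          exact (center_le_muSup B n (by omega)).trans hB.1.2.1
        · by_cases h4 : n + 1 < l
          · rw [f3 (n + 1) (by omega) h4]
            exact (center_le_muSup B (n + 1) (by omega)).trans hB.1.2.1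
          · rw [f4 (n + 1) (by omega)]
            exact (center_le_muSup B (n + 2) (by omega)).trans hB.1.2.1
  · -- partially above : outer
    rw [houterc, houterr]; exact hB.2.1
  · -- partially above : balls
    intro n hn
    rcases hB.2.2 n hn with hc | ⟨m, hm, hss⟩
    · left; rw [houterc, houterr]; exact hc
    · by_cases hmk : m = k
      · right; exact ⟨p, hp1, by rw [hctrp, hradp]; exact (hmk ▸ hss).trans hinck⟩
      · by_cases hml : m = l
        · right; exact ⟨p, hp1, by rw [hctrp, hradp]; exact (hml ▸ hss).trans hincl⟩
        · obtain ⟨m', hm', _, hBm'⟩ := corresp m hm hmk hml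
          right
          refine ⟨m', hm', ?_⟩
          rw [show ctr B' m' = ctr B m from congrArg Prod.fst hBm',
            show rad B' m' = rad B m from congrArg (fun q => ((q.2 : ℝ))) hBm']
          exact hss

lemma dist_lin1 (x y : ℂ) (β : ℝ) (hβ : 0 ≤ β) :
    dist (x + β • (y - x)) x = β * dist x y := by
  rw [dist_eq_norm, add_sub_cancel_left, norm_smul, Real.norm_eq_abs, abs_of_nonneg hβ,
    dist_eq_norm, norm_sub_rev]

lemma dist_lin2 (x y : ℂ) (β : ℝ) (hβ : β ≤ 1) :
    dist (x + β • (y - x)) y = (1 - β) * dist x y := by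
  have h : x + β • (y - x) - y = (β - 1) • (y - x) := by
    rw [Complex.real_smul, Complex.real_smul]; push_cast; ring
  rw [dist_eq_norm, h, norm_smul, Real.norm_eq_abs, abs_of_nonpos (by linarith),
    dist_eq_norm, norm_sub_rev]
  ring

lemma dist_lin3 (x y : ℂ) (β : ℝ) (hβ : 0 ≤ β) :
    dist (x + β • (x - y)) y = (1 + β) * dist x y := by
  have h : x + β • (x - y) - y = (1 + β) • (x - y) := by
    rw [Complex.real_smul, Complex.real_smul]; push_cast; ring
  rw [dist_eq_norm, h, norm_smul, Real.norm_eq_abs, abs_of_nonneg (by linarith), dist_eq_norm]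

lemma norm_segment (x y : ℂ) (β : ℝ) (h0 : 0 ≤ β) (h1 : β ≤ 1) :
    ‖x + β • (y - x)‖ ≤ max ‖x‖ ‖y‖ := by
  have hxy : x + β • (y - x) = (1 - β) • x + β • y := by
    rw [Complex.real_smul, Complex.real_smul, Complex.real_smul]; push_cast; ring
  rw [hxy]
  calc ‖(1 - β) • x + β • y‖ ≤ ‖(1 - β) • x‖ + ‖β • y‖ := norm_add_le _ _
    _ = (1 - β) * ‖x‖ + β * ‖y‖ := by
        rw [norm_smul, norm_smul, Real.norm_eq_abs, Real.norm_eq_abs,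
          abs_of_nonneg (by linarith), abs_of_nonneg h0]
    _ ≤ max ‖x‖ ‖y‖ := by
        nlinarith [le_max_left ‖x‖ ‖y‖, le_max_right ‖x‖ ‖y‖, norm_nonneg x, norm_nonneg y]

lemma rho_toReal_delete (B' B : ASC) (x : NNReal)
    (h : rhoSum B' + (x : ℝ≥0∞) = rhoSum B) (hfin : rhoSum B ≠ ⊤) :
    (rhoSum B').toReal + (x : ℝ) = (rhoSum B).toReal := by
  have h1 : rhoSum B' ≠ ⊤ := by
    intro hh; rw [hh, top_add] at h; exact hfin h.symm
  rw [← h, ENNReal.toReal_add h1 (by simp)]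
  simp

lemma rho_toReal_comb (B' B : ASC) (x y z : NNReal)
    (h : rhoSum B' + (x : ℝ≥0∞) + (y : ℝ≥0∞) = rhoSum B + (z : ℝ≥0∞))
    (hfin : rhoSum B ≠ ⊤) :
    (rhoSum B').toReal + (x : ℝ) + (y : ℝ) = (rhoSum B).toReal + (z : ℝ) := by
  have h1 : rhoSum B' ≠ ⊤ := by
    intro hh; rw [hh, top_add, top_add] at h
    exact (ENNReal.add_ne_top.2 ⟨hfin, by simp⟩) h.symm
  have := congrArg ENNReal.toReal h
  rw [ENNReal.toReal_add (ENNReal.add_ne_top.2 ⟨h1, by simp⟩) (by simp),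
    ENNReal.toReal_add h1 (by simp), ENNReal.toReal_add hfin (by simp)] at this
  simpa using this



lemma norm_le_muSupA (A B : ASC) (hB : B ∈ Stilde A) (c : ℂ) (k l : ℕ)
    (hk : 1 ≤ k) (hl : 1 ≤ l) (h : ‖c‖ ≤ max ‖(B k).1‖ ‖(B l).1‖) :
    (‖c‖₊ : ℝ≥0∞) ≤ muSup A := by
  rcases le_max_iff.1 h with h' | h'
  · exact le_trans (ENNReal.coe_le_coe.2 (by exact_mod_cast h'))
      ((center_le_muSup B k hk).trans hB.1.2.1)
  · exact le_trans (ENNReal.coe_le_coe.2 (by exact_mod_cast h'))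
      ((center_le_muSup B l hl).trans hB.1.2.1)

/-- delete an inner ball, outer unchanged; companioned or separated. -/
lemma delete_gain (A B : ASC) (hB : B ∈ Stilde A) (j : ℕ) (hjS : j ∈ SIdx B)
    (hopt : ball (ctr B j) (rad B j) ∩ closedBall (ctr B 0) (rad B 0) = ∅ ∨
      ∃ m, 1 ≤ m ∧ m ≠ j ∧ ball (ctr B j) (rad B j) ⊆ ball (ctr B m) (rad B m)) :
    ∃ B', B' ∈ Stilde A ∧ delta1 B < delta1 B' := by
  obtain ⟨hj1, hj2⟩ := hjS
  obtain ⟨B', hB', hB'0, hrho, -⟩ :=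
    delASC_spec A B hB j hj1 ((B 0).1) ((B 0).2) subset_rfl hopt
  have hfinB := Stilde_rho_ne_top A B hB
  have hfinB' := Stilde_rho_ne_top A B' hB'
  have htr := rho_toReal_delete B' B ((B j).2) hrho hfinB
  refine ⟨B', hB', delta1_lt_delta1 B B' hfinB hfinB' ?_⟩
  have hr0 : rad B' 0 = rad B 0 := congrArg (fun q => ((q.2 : ℝ) : ℝ)) hB'0
  have : (0 : ℝ) < ((B j).2 : ℝ) := hj2
  rw [hr0]
  linarith

lemma move_overlap' (A B : ASC) (hB : B ∈ Stilde A) (k l : ℕ)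
    (hkS : k ∈ SIdx B) (hlS : l ∈ SIdx B) (hkl : k < l)
    (hd : dist (ctr B k) (ctr B l) < rad B k + rad B l) :
    ∃ B', B' ∈ Stilde A ∧ delta1 B < delta1 B' := by
  obtain ⟨hk1, hk2⟩ := hkS
  obtain ⟨hl1, hl2⟩ := hlS
  have hfinB := Stilde_rho_ne_top A B hB
  set sk := rad B k with hskdef
  set sl := rad B l with hsldef
  set d := dist (ctr B k) (ctr B l) with hddef
  by_cases hc1 : d + sl ≤ sk
  · -- ball l inside ball k : delete l
    refine delete_gain A B hB l ⟨hl1, hl2⟩ (Or.inr ⟨k, hk1, by omega, ?_⟩)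
    intro x hx
    rw [mem_ball] at hx ⊢
    calc dist x (ctr B k) ≤ dist x (ctr B l) + dist (ctr B l) (ctr B k) := dist_triangle _ _ _
      _ < sl + d := by rw [dist_comm (ctr B l)]; exact add_lt_add_left hx _
      _ ≤ sk := by linarith
  · by_cases hc2 : d + sk ≤ sl
    · refine delete_gain A B hB k ⟨hk1, hk2⟩ (Or.inr ⟨l, hl1, by omega, ?_⟩)
      intro x hx
      rw [mem_ball] at hx ⊢
      calc dist x (ctr B l) ≤ dist x (ctr B k) + d := dist_triangle _ _ _
        _ < sk + d := add_lt_add_left hx _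
        _ ≤ sl := by linarith
    · -- genuine combine
      push_neg at hc1 hc2
      have hd0 : 0 < d := by
        rcases lt_or_eq_of_le (dist_nonneg : 0 ≤ d) with h | h
        · exact h
        · exfalso
          have hd' : d = 0 := by rw [hddef, ← h]
          rw [hd'] at hc1 hc2
          linarith
      set θ : ℝ := (d + sl - sk) / (2 * d) with hθdef
      have hθ0 : 0 ≤ θ := by
        apply div_nonneg _ (by linarith); linarith
      have hθ1 : θ ≤ 1 := by
        rw [div_le_one (by linarith)]; linarith
      set c : ℂ := ctr B k + θ • (ctr B l - ctr B k) with hcdef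
      have hdck : dist c (ctr B k) = θ * d := dist_lin1 _ _ _ hθ0
      have hdcl : dist c (ctr B l) = (1 - θ) * d := dist_lin2 _ _ _ hθ1
      have hθd : θ * d = (d + sl - sk) / 2 := by
        rw [hθdef]; field_simp
      have hθd' : (1 - θ) * d = (d + sk - sl) / 2 := by
        rw [hθdef]; field_simp; ring
      set r'R : ℝ := (sk + sl + d) / 2 with hr'def
      have hr'0 : 0 ≤ r'R := by
        have := dist_nonneg (x := ctr B k) (y := ctr B l)
        have h1 : 0 ≤ sk := rad_nonneg B k
        have h2 : 0 ≤ sl := rad_nonneg B l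
        rw [hr'def]; linarith
      set r' : NNReal := Real.toNNReal r'R with hr'nn
      have hr'coe : (r' : ℝ) = r'R := Real.coe_toNNReal _ hr'0
      have hmaxk : (B k).2 ≤ r' := by
        rw [← NNReal.coe_le_coe, hr'coe]
        show sk ≤ r'R
        rw [hr'def]; linarith
      have hmaxl : (B l).2 ≤ r' := by
        rw [← NNReal.coe_le_coe, hr'coe]
        show sl ≤ r'R
        rw [hr'def]; linarith
      have hsum : r' ≤ (B k).2 + (B l).2 := by
        rw [← NNReal.coe_le_coe, hr'coe, NNReal.coe_add]
        show r'R ≤ sk + sl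
        rw [hr'def]; linarith
      have hinck : ball (ctr B k) sk ⊆ ball c (r' : ℝ) := by
        intro x hx
        rw [mem_ball] at hx ⊢
        calc dist x c ≤ dist x (ctr B k) + dist (ctr B k) c := dist_triangle _ _ _
          _ < sk + θ * d := by
              rw [dist_comm (ctr B k) c, hdck]; exact add_lt_add_left hx _
          _ ≤ (r' : ℝ) := by rw [hr'coe, hθd, hr'def]; linarith
      have hincl : ball (ctr B l) sl ⊆ ball c (r' : ℝ) := by
        intro x hx
        rw [mem_ball] at hx ⊢
        calc dist x c ≤ dist x (ctr B l) + dist (ctr B l) c := dist_triangle _ _ _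
          _ < sl + (1 - θ) * d := by
              rw [dist_comm (ctr B l) c, hdcl]; exact add_lt_add_left hx _
          _ ≤ (r' : ℝ) := by rw [hr'coe, hθd', hr'def]; linarith
      have hnorm : (‖c‖₊ : ℝ≥0∞) ≤ muSup A := by
        refine norm_le_muSupA A B hB c k l hk1 hl1 ?_
        exact norm_segment (ctr B k) (ctr B l) θ hθ0 hθ1
      obtain ⟨B', hB', hB'0, hrho, p, hp1, hBp, -⟩ :=
        combASC_spec A B hB k l hk1 hkl c r' hmaxk hmaxl hsum hinck hincl hnorm
      have hfinB' := Stilde_rho_ne_top A B' hB'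
      have htr := rho_toReal_comb B' B ((B k).2) ((B l).2) r' hrho hfinB
      refine ⟨B', hB', delta1_lt_delta1 B B' hfinB hfinB' ?_⟩
      have hr0 : rad B' 0 = rad B 0 := congrArg (fun q => ((q.2 : ℝ) : ℝ)) hB'0
      have hskr : ((B k).2 : ℝ) = sk := rfl
      have hslr : ((B l).2 : ℝ) = sl := rfl
      rw [hskr, hslr, hr'coe] at htr
      have hlt : r'R < sk + sl := by rw [hr'def]; linarith
      rw [hr0]
      linarith

lemma move_overlap (A B : ASC) (hB : B ∈ Stilde A) (k l : ℕ)
    (hkS : k ∈ SIdx B) (hlS : l ∈ SIdx B) (hkl : k ≠ l)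
    (hd : dist (ctr B k) (ctr B l) < rad B k + rad B l) :
    ∃ B', B' ∈ Stilde A ∧ delta1 B < delta1 B' := by
  rcases lt_or_gt_of_ne hkl with h | h
  · exact move_overlap' A B hB k l hkS hlS h hd
  · exact move_overlap' A B hB l k hlS hkS h (by rw [dist_comm, add_comm]; exact hd)

lemma move_poke (A B : ASC) (hB : B ∈ Stilde A) (k : ℕ) (hkS : k ∈ SIdx B)
    (hks : rad B k < rad B 0)
    (hpoke : rad B 0 < dist (ctr B 0) (ctr B k) + rad B k) :
    ∃ B', B' ∈ Stilde A ∧ delta1 B < delta1 B' := by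
  obtain ⟨hk1, hk2⟩ := hkS
  have hfinB := Stilde_rho_ne_top A B hB
  set sk := rad B k with hskdef
  set s0 := rad B 0 with hs0def
  set d := dist (ctr B 0) (ctr B k) with hddef
  by_cases h1 : s0 + sk ≤ d
  · -- ball k entirely outside the outer ball : delete it
    refine delete_gain A B hB k ⟨hk1, hk2⟩ (Or.inl ?_)
    rw [Set.eq_empty_iff_forall_notMem]
    rintro x ⟨hx1, hx2⟩
    rw [mem_ball] at hx1
    rw [mem_closedBall] at hx2
    have : d ≤ dist (ctr B 0) x + dist x (ctr B k) := dist_triangle _ _ _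
    rw [dist_comm (ctr B 0) x] at this
    linarith
  · push_neg at h1
    have hd0 : 0 < d := by
      have h2 : 0 < s0 - sk := by linarith
      have : s0 - sk < d := by linarith
      linarith
    set t : ℝ := (s0 + sk - d) / 2 with htdef
    have ht0 : 0 < t := by rw [htdef]; linarith
    set r0'R : ℝ := (s0 - sk + d) / 2 with hr0'def
    have hr0'0 : 0 ≤ r0'R := by rw [hr0'def]; linarith
    set c0 : ℂ := ctr B 0 + (t / d) • (ctr B 0 - ctr B k) with hc0def
    have hβ0 : 0 ≤ t / d := div_nonneg ht0.le hd0.le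
    have hdc0 : dist c0 (ctr B 0) = t := by
      rw [hc0def, dist_eq_norm, add_sub_cancel_left, norm_smul, Real.norm_eq_abs,
        abs_of_nonneg hβ0, ← dist_eq_norm, ← hddef]
      field_simp
    have hdc0k : dist c0 (ctr B k) = d + t := by
      have h3 := dist_lin3 (ctr B 0) (ctr B k) (t / d) hβ0
      rw [hc0def, h3, ← hddef]
      field_simp
    set r0' : NNReal := Real.toNNReal r0'R with hr0'nn
    have hr0'coe : (r0' : ℝ) = r0'R := Real.coe_toNNReal _ hr0'0
    have hsub : closedBall c0 (r0' : ℝ) ⊆ closedBall (ctr B 0) (rad B 0) := by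
      intro x hx
      rw [mem_closedBall] at hx ⊢
      calc dist x (ctr B 0) ≤ dist x c0 + dist c0 (ctr B 0) := dist_triangle _ _ _
        _ = dist x c0 + t := by rw [hdc0]
        _ ≤ (r0' : ℝ) + t := add_le_add_left hx _
        _ ≤ s0 := by rw [hr0'coe, hr0'def, htdef]; linarith
    have hopt : ball (ctr B k) (rad B k) ∩ closedBall c0 (r0' : ℝ) = ∅ := by
      rw [Set.eq_empty_iff_forall_notMem]
      rintro x ⟨hx1, hx2⟩
      rw [mem_ball] at hx1
      rw [mem_closedBall] at hx2
      have h3 : dist c0 (ctr B k) ≤ dist c0 x + dist x (ctr B k) := dist_triangle _ _ _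
      rw [dist_comm c0 x] at h3
      rw [hdc0k] at h3
      rw [hr0'coe, hr0'def] at hx2
      rw [htdef] at h3
      linarith
    obtain ⟨B', hB', hB'0, hrho, -⟩ :=
      delASC_spec A B hB k hk1 c0 r0' hsub (Or.inl hopt)
    have hfinB' := Stilde_rho_ne_top A B' hB'
    have htr := rho_toReal_delete B' B ((B k).2) hrho hfinB
    refine ⟨B', hB', delta1_lt_delta1 B B' hfinB hfinB' ?_⟩
    have hr0 : rad B' 0 = (r0' : ℝ) := congrArg (fun q => ((q.2 : ℝ) : ℝ)) hB'0
    have hskr : ((B k).2 : ℝ) = sk := rfl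
    rw [hskr] at htr
    rw [hr0, hr0'coe, hr0'def]
    linarith

lemma norm_mk (a b : ℝ) : ‖(a : ℂ) + b * Complex.I‖ = Real.sqrt (a ^ 2 + b ^ 2) := by
  rw [Complex.norm_def, Complex.normSq_apply]
  simp [pow_two]

lemma dist_along (b0 u : ℂ) (hu : ‖u‖ = 1) (α β : ℝ) :
    dist (b0 + α • u) (b0 + β • u) = |α - β| := by
  have h : b0 + α • u - (b0 + β • u) = ((α - β : ℝ)) • u := by
    rw [Complex.real_smul, Complex.real_smul, Complex.real_smul]; push_cast; ring
  rw [dist_eq_norm, h, norm_smul, hu, Real.norm_eq_abs, mul_one]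

lemma dist_along2 (b0 u : ℂ) (hu : ‖u‖ = 1) (α β tv : ℝ) :
    dist (b0 + α • u + tv • (Complex.I * u)) (b0 + β • u) = Real.sqrt ((α - β) ^ 2 + tv ^ 2) := by
  have h : b0 + α • u + tv • (Complex.I * u) - (b0 + β • u)
      = (((α - β : ℝ) : ℂ) + (tv : ℂ) * Complex.I) * u := by
    rw [Complex.real_smul, Complex.real_smul, Complex.real_smul]; push_cast; ring
  rw [dist_eq_norm, h, norm_mul, hu, mul_one, norm_mk]



lemma dist_along0 (b0 u : ℂ) (hu : ‖u‖ = 1) (α : ℝ) : dist (b0 + α • u) b0 = |α| := by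
  have h := dist_along b0 u hu α 0
  simpa using h

set_option maxHeartbeats 2000000 in
/-- Theorem 4.10: if `X_A` has empty interior, then every abstract Swiss
cheese in `S₁` is classical. -/
theorem stmt11 (A : ASC) (hN : memN A) (hrf : RedundancyFree A) (hd : 0 < delta1 A)
    (hint : interior (Xset A) = ∅) :
    ∀ B ∈ S1 A, IsClassicalASC B := by
  intro B hB1
  obtain ⟨hBst, hBsup⟩ := hB1
  have hA := mem_Stilde_self A hN
  have hfinB := Stilde_rho_ne_top A B hBst
  have hsup_ge : delta1 A ≤ delta1 B := by rw [hBsup]; exact le_sSup ⟨A, hA, rfl⟩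
  have hBpos : 0 < delta1 B := lt_of_lt_of_le hd hsup_ge
  have hdB : 0 < rad B 0 - (rhoSum B).toReal := delta1_pos_real B hfinB hBpos
  have contra : ∀ B', B' ∈ Stilde A → delta1 B < delta1 B' → False := by
    intro B' h1 h2
    have h3 : delta1 B' ≤ delta1 B := by rw [hBsup]; exact le_sSup ⟨B', h1, rfl⟩
    exact absurd h3 (not_le.2 h2)
  have hXB : interior (Xset B) = ∅ := by
    have h1 := interior_mono (Xset_subset B A hBst.2)
    rw [hint] at h1
    exact Set.subset_empty_iff.1 h1
  have cusp : ∀ Cs : Set ℂ, IsOpen Cs → Cs.Nonempty → Cs ⊆ closedBall (ctr B 0) (rad B 0) →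
      ∃ w ∈ Cs, ∃ j, 1 ≤ j ∧ w ∈ ball (ctr B j) (rad B j) := by
    intro Cs hO hNe hsub
    have h2 : ¬ Cs ⊆ Xset B := by
      intro hss
      have h3 := interior_maximal hss hO
      rw [hXB] at h3
      obtain ⟨y, hy⟩ := hNe
      exact Set.notMem_empty y (h3 hy)
    obtain ⟨w, hwC, hwX⟩ := Set.not_subset.1 h2
    have hw2 : w ∈ ⋃ n : ℕ, ball (ctr B (n + 1)) (rad B (n + 1)) := by
      by_contra hc
      exact hwX ⟨hsub hwC, hc⟩
    obtain ⟨n, hn⟩ := Set.mem_iUnion.1 hw2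
    exact ⟨w, hwC, n + 1, by omega, hn⟩
  have noOverlap : ∀ k l, k ∈ SIdx B → l ∈ SIdx B → k ≠ l →
      rad B k + rad B l ≤ dist (ctr B k) (ctr B l) := by
    intro k l hk hl hne
    by_contra h
    push_neg at h
    obtain ⟨B', h1, h2⟩ := move_overlap A B hBst k l hk hl hne h
    exact contra B' h1 h2
  have radlt : ∀ k, k ∈ SIdx B → rad B k < rad B 0 := by
    intro k hk
    have h1 := rad_le_rho B k hk.1 hfinB
    linarith
  have noPoke : ∀ k, k ∈ SIdx B → dist (ctr B 0) (ctr B k) + rad B k ≤ rad B 0 := by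
    intro k hk
    by_contra h
    push_neg at h
    obtain ⟨B', h1, h2⟩ := move_poke A B hBst k hk (radlt k hk) h
    exact contra B' h1 h2
  -- Step 3 : each closed inner ball is contained in the open outer ball
  have step3 : ∀ k ∈ SIdx B, closedBall (ctr B k) (rad B k) ⊆ ball (ctr B 0) (rad B 0) := by
    intro k hk
    rcases lt_or_eq_of_le (noPoke k hk) with hlt | heq
    · intro x hx
      rw [mem_closedBall] at hx
      rw [mem_ball]
      calc dist x (ctr B 0) ≤ dist x (ctr B k) + dist (ctr B k) (ctr B 0) := dist_triangle _ _ _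
        _ = dist x (ctr B k) + dist (ctr B 0) (ctr B k) := by rw [dist_comm (ctr B k)]
        _ < rad B 0 := by linarith
    · -- internal tangency : impossible
      exfalso
      obtain ⟨hk1, hk2⟩ := hk
      set sk := rad B k with hskdef
      set s0 := rad B 0 with hs0def
      set dst := dist (ctr B 0) (ctr B k) with hddef
      have hsk0 : sk < s0 := radlt k ⟨hk1, hk2⟩
      have hd0 : 0 < dst := by
        rcases lt_or_eq_of_le (dist_nonneg : (0:ℝ) ≤ dst) with h | h
        · exact h
        · exfalso
          have hd' : dst = 0 := by rw [hddef, ← h]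
          rw [hd'] at heq; linarith
      obtain ⟨u, hu, hbk⟩ : ∃ u : ℂ, ‖u‖ = 1 ∧ ctr B k = ctr B 0 + dst • u := by
        refine ⟨(dst⁻¹ : ℝ) • (ctr B k - ctr B 0), ?_, ?_⟩
        · rw [norm_smul, Real.norm_eq_abs, abs_of_nonneg (inv_nonneg.2 hd0.le),
            ← dist_eq_norm, dist_comm, ← hddef]
          field_simp
        · rw [smul_smul, mul_inv_cancel₀ hd0.ne', one_smul]
          ring
      obtain ⟨z, hzdef⟩ : ∃ z : ℂ, z = ctr B 0 + s0 • u := ⟨_, rfl⟩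
      obtain ⟨c0, hc0def⟩ : ∃ c0 : ℂ, c0 = ctr B 0 + (-sk) • u := ⟨_, rfl⟩
      have hdc0b0 : dist c0 (ctr B 0) = sk := by
        rw [hc0def, dist_along0 _ _ hu, abs_of_nonpos (by linarith)]; ring
      have hdc0z : dist c0 z = sk + s0 := by
        rw [hc0def, hzdef, dist_along _ _ hu, abs_of_nonpos (by linarith)]; ring
      have hdc0k : dist c0 (ctr B k) = s0 := by
        rw [hc0def, hbk, dist_along _ _ hu, abs_of_nonpos (by linarith)]
        linarith
      -- the cusp point
      set δ : ℝ := sk ^ 2 / (2 * (sk + s0)) with hδdef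
      have hne0 : sk + s0 ≠ 0 := by linarith
      have hδ0 : 0 < δ := by
        apply div_pos (by nlinarith) (by linarith)
      have hδlt : δ < sk + s0 := by
        rw [hδdef, div_lt_iff₀ (by linarith)]
        nlinarith
      set tvsq : ℝ := (sk + s0) * δ - δ ^ 2 with htsqdef
      have htsq0 : 0 < tvsq := by rw [htsqdef]; nlinarith
      set tv : ℝ := Real.sqrt tvsq with htvdef
      have htv2 : tv ^ 2 = tvsq := Real.sq_sqrt htsq0.le
      have htvpos : 0 < tv := Real.sqrt_pos.2 htsq0
      have hδval : (sk + s0) * δ = sk ^ 2 / 2 := by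
        rw [hδdef]; field_simp
      have hδs : δ ^ 2 + tv ^ 2 = sk ^ 2 / 2 := by
        rw [htv2, htsqdef, ← hδval]; ring
      obtain ⟨x, hxdef⟩ : ∃ x : ℂ, x = ctr B 0 + (s0 - δ) • u + tv • (Complex.I * u) :=
        ⟨_, rfl⟩
      have e0 : ctr B 0 + (0 : ℝ) • u = ctr B 0 := by rw [zero_smul, add_zero]
      have hx1 : dist x (ctr B 0) < s0 := by
        have h2 := dist_along2 (ctr B 0) u hu (s0 - δ) 0 tv
        rw [e0, ← hxdef] at h2
        rw [h2, Real.sqrt_lt' (by linarith)]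
        nlinarith
      have hx2 : sk < dist x (ctr B k) := by
        have h2 := dist_along2 (ctr B 0) u hu (s0 - δ) dst tv
        rw [← hbk, ← hxdef] at h2
        rw [h2, Real.lt_sqrt hk2.le]
        have h3 : s0 - δ - dst = sk - δ := by linarith
        rw [h3]
        nlinarith
      have hx3 : dist x z < sk := by
        have h2 := dist_along2 (ctr B 0) u hu (s0 - δ) s0 tv
        rw [← hzdef, ← hxdef] at h2
        rw [h2, Real.sqrt_lt' (by linarith)]
        nlinarith
      -- find a third ball meeting the cusp
      set Cs : Set ℂ := ball (ctr B 0) s0 ∩ (closedBall (ctr B k) sk)ᶜ ∩ ball z sk with hCdef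
      have hCopen : IsOpen Cs :=
        ((isOpen_ball.inter Metric.isClosed_closedBall.isOpen_compl).inter isOpen_ball)
      have hCne : Cs.Nonempty := by
        refine ⟨x, ⟨⟨mem_ball.2 hx1, ?_⟩, mem_ball.2 hx3⟩⟩
        simp only [Set.mem_compl_iff, mem_closedBall, not_le]
        exact hx2
      have hCsub : Cs ⊆ closedBall (ctr B 0) (rad B 0) := fun y hy =>
        ball_subset_closedBall hy.1.1
      obtain ⟨w, hwC, j, hj1, hwj⟩ := cusp Cs hCopen hCne hCsub
      obtain ⟨⟨hwb0, hwk⟩, hwz⟩ := hwC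
      have hj2 : 0 < rad B j := lt_of_le_of_lt dist_nonneg (mem_ball.1 hwj)
      have hjk : j ≠ k := by
        intro h
        rw [h] at hwj
        exact hwk (ball_subset_closedBall hwj)
      -- shrink the outer ball, deleting ball k
      set r0'R : ℝ := s0 - sk with hr0'Rdef
      set r0' : NNReal := Real.toNNReal r0'R with hr0'def
      have hr0'coe : (r0' : ℝ) = r0'R := Real.coe_toNNReal _ (by rw [hr0'Rdef]; linarith)
      have hsubO : closedBall c0 (r0' : ℝ) ⊆ closedBall (ctr B 0) (rad B 0) := by
        intro y hy
        rw [mem_closedBall] at hy ⊢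
        calc dist y (ctr B 0) ≤ dist y c0 + dist c0 (ctr B 0) := dist_triangle _ _ _
          _ ≤ (r0' : ℝ) + sk := by rw [hdc0b0]; exact add_le_add_left hy _
          _ ≤ rad B 0 := by rw [hr0'coe, hr0'Rdef]; linarith
      have hopt : ball (ctr B k) (rad B k) ∩ closedBall c0 (r0' : ℝ) = ∅ := by
        rw [Set.eq_empty_iff_forall_notMem]
        rintro y ⟨hy1, hy2⟩
        rw [mem_ball] at hy1
        rw [mem_closedBall] at hy2
        have h3 : dist c0 (ctr B k) ≤ dist c0 y + dist y (ctr B k) := dist_triangle _ _ _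
        rw [dist_comm c0 y] at h3
        rw [hdc0k] at h3
        rw [hr0'coe, hr0'Rdef] at hy2
        have hy1' : dist y (ctr B k) < sk := hy1
        linarith
      obtain ⟨B', hB'st, hB'0, hrho, corresp⟩ :=
        delASC_spec A B hBst k hk1 c0 r0' hsubO (Or.inl hopt)
      have hfinB' := Stilde_rho_ne_top A B' hB'st
      have htr := rho_toReal_delete B' B ((B k).2) hrho hfinB
      have hskr : ((B k).2 : ℝ) = sk := rfl
      rw [hskr] at htr
      have hr0B' : rad B' 0 = r0'R := by
        have h4 : rad B' 0 = (r0' : ℝ) := congrArg (fun q => ((q.2 : ℝ) : ℝ)) hB'0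
        rw [h4, hr0'coe]
      have hctr0B' : ctr B' 0 = c0 := congrArg Prod.fst hB'0
      obtain ⟨j', hj'1, hj'eq⟩ := corresp j hj1 hjk
      have hctrj' : ctr B' j' = ctr B j := congrArg Prod.fst hj'eq
      have hradj' : rad B' j' = rad B j := congrArg (fun q => ((q.2 : ℝ) : ℝ)) hj'eq
      have hj'S : j' ∈ SIdx B' := ⟨hj'1, by rw [hradj']; exact hj2⟩
      have hks' : rad B' j' < rad B' 0 := by
        have h5 := rad_le_rho B' j' hj'1 hfinB'
        rw [hr0B', hr0'Rdef]
        rw [hradj'] at h5 ⊢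
        linarith
      have hpoke' : rad B' 0 < dist (ctr B' 0) (ctr B' j') + rad B' j' := by
        rw [hr0B', hr0'Rdef, hctr0B', hctrj', hradj']
        have t1 : dist c0 z ≤ dist c0 w + dist w z := dist_triangle _ _ _
        have t2 : dist c0 w ≤ dist c0 (ctr B j) + dist (ctr B j) w := dist_triangle _ _ _
        have t3 : dist (ctr B j) w < rad B j := by
          rw [dist_comm]; exact mem_ball.1 hwj
        have t4 : dist w z < sk := mem_ball.1 hwz
        rw [hdc0z] at t1
        have t5 : dist c0 (ctr B j) = dist (ctr B j) c0 := dist_comm _ _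
        rw [t5] at t2 ⊢
        linarith
      obtain ⟨B'', hB''st, h2⟩ := move_poke A B' hB'st j' hj'S hks' hpoke'
      have heqd : delta1 B = delta1 B' := by
        rw [delta1_coe B hfinB, delta1_coe B' hfinB']
        have hre : rad B' 0 - (rhoSum B').toReal = rad B 0 - (rhoSum B).toReal := by
          rw [hr0B', hr0'Rdef]; linarith
        rw [hre]
      exact contra B'' hB''st (heqd ▸ h2)
  -- Step 4 : closed inner balls are pairwise disjoint
  have step4 : ∀ k l, k ∈ SIdx B → l ∈ SIdx B → k < l →
      closedBall (ctr B k) (rad B k) ∩ closedBall (ctr B l) (rad B l) = ∅ := by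
    intro k l hkS hlS hkl
    rw [Set.eq_empty_iff_forall_notMem]
    rintro x0 ⟨hx0k, hx0l⟩
    have hk1 : 1 ≤ k := hkS.1
    have hl1 : 1 ≤ l := hlS.1
    set sk := rad B k with hskdef
    set sl := rad B l with hsldef
    set dst := dist (ctr B k) (ctr B l) with hddef
    have hk2 : 0 < sk := hkS.2
    have hl2 : 0 < sl := hlS.2
    have hdle : dst ≤ sk + sl := by
      have t1 : dst ≤ dist (ctr B k) x0 + dist x0 (ctr B l) := dist_triangle _ _ _
      have t2 : dist (ctr B k) x0 ≤ sk := by rw [dist_comm]; exact mem_closedBall.1 hx0k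
      have t3 : dist x0 (ctr B l) ≤ sl := mem_closedBall.1 hx0l
      linarith
    have heq : sk + sl = dst := le_antisymm (noOverlap k l hkS hlS (by omega)) hdle
    have hd0 : 0 < dst := by linarith
    obtain ⟨u, hu, hbl⟩ : ∃ u : ℂ, ‖u‖ = 1 ∧ ctr B l = ctr B k + dst • u := by
      refine ⟨(dst⁻¹ : ℝ) • (ctr B l - ctr B k), ?_, ?_⟩
      · rw [norm_smul, Real.norm_eq_abs, abs_of_nonneg (inv_nonneg.2 hd0.le),
          ← dist_eq_norm, dist_comm, ← hddef]
        field_simp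
      · rw [smul_smul, mul_inv_cancel₀ hd0.ne', one_smul]
        ring
    obtain ⟨z, hzdef⟩ : ∃ z : ℂ, z = ctr B k + sk • u := ⟨_, rfl⟩
    obtain ⟨c, hcdef⟩ : ∃ c : ℂ, c = ctr B k + sl • u := ⟨_, rfl⟩
    have hdzk : dist z (ctr B k) = sk := by
      rw [hzdef, dist_along0 _ _ hu, abs_of_nonneg hk2.le]
    have hdzc : dist z c = |sk - sl| := by
      rw [hzdef, hcdef, dist_along _ _ hu]
    have hdck : dist c (ctr B k) = sl := by
      rw [hcdef, dist_along0 _ _ hu, abs_of_nonneg hl2.le]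
    have hdcl : dist c (ctr B l) = sk := by
      rw [hcdef, hbl, dist_along _ _ hu, abs_of_nonpos (by linarith)]
      linarith
    have hzball : z ∈ ball (ctr B 0) (rad B 0) :=
      step3 k hkS (mem_closedBall.2 (le_of_eq hdzk))
    have hzlt : dist z (ctr B 0) < rad B 0 := mem_ball.1 hzball
    set ε : ℝ := min (min sk sl) (rad B 0 - dist z (ctr B 0)) with hεdef
    have hε0 : 0 < ε := lt_min (lt_min hk2 hl2) (by linarith)
    have hεsk : ε ≤ sk := le_trans (min_le_left _ _) (min_le_left _ _)
    have hεsl : ε ≤ sl := le_trans (min_le_left _ _) (min_le_right _ _)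
    have hεz : ε ≤ rad B 0 - dist z (ctr B 0) := min_le_right _ _
    obtain ⟨x, hxdef⟩ : ∃ x : ℂ, x = ctr B k + sk • u + (ε / 2) • (Complex.I * u) := ⟨_, rfl⟩
    have e0 : ctr B k + (0 : ℝ) • u = ctr B k := by rw [zero_smul, add_zero]
    have hx1 : sk < dist x (ctr B k) := by
      have h2 := dist_along2 (ctr B k) u hu sk 0 (ε / 2)
      rw [e0, ← hxdef] at h2
      rw [h2, Real.lt_sqrt hk2.le]
      nlinarith
    have hx2 : sl < dist x (ctr B l) := by
      have h2 := dist_along2 (ctr B k) u hu sk dst (ε / 2)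
      rw [← hbl, ← hxdef] at h2
      rw [h2, Real.lt_sqrt hl2.le]
      have h3 : sk - dst = -sl := by linarith
      rw [h3]
      nlinarith
    have hx3 : dist x z < ε := by
      have h2 := dist_along2 (ctr B k) u hu sk sk (ε / 2)
      rw [← hxdef, ← hzdef] at h2
      rw [h2, Real.sqrt_lt' hε0]
      nlinarith
    have hx0' : dist x (ctr B 0) < rad B 0 := by
      have t1 : dist x (ctr B 0) ≤ dist x z + dist z (ctr B 0) := dist_triangle _ _ _
      linarith
    set Cs : Set ℂ := ball (ctr B 0) (rad B 0) ∩ (closedBall (ctr B k) sk)ᶜ ∩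
      (closedBall (ctr B l) sl)ᶜ ∩ ball z ε with hCdef
    have hCopen : IsOpen Cs :=
      (((isOpen_ball.inter Metric.isClosed_closedBall.isOpen_compl).inter
        Metric.isClosed_closedBall.isOpen_compl).inter isOpen_ball)
    have hCne : Cs.Nonempty := by
      refine ⟨x, ⟨⟨⟨mem_ball.2 hx0', ?_⟩, ?_⟩, mem_ball.2 hx3⟩⟩
      · simp only [Set.mem_compl_iff, mem_closedBall, not_le]
        exact hx1
      · simp only [Set.mem_compl_iff, mem_closedBall, not_le]
        exact hx2
    have hCsub : Cs ⊆ closedBall (ctr B 0) (rad B 0) := fun y hy =>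
      ball_subset_closedBall hy.1.1.1
    obtain ⟨w, hwC, j, hj1, hwj⟩ := cusp Cs hCopen hCne hCsub
    obtain ⟨⟨⟨hwb0, hwk⟩, hwl⟩, hwz⟩ := hwC
    have hj2 : 0 < rad B j := lt_of_le_of_lt dist_nonneg (mem_ball.1 hwj)
    have hjk : j ≠ k := by
      intro h; rw [h] at hwj; exact hwk (ball_subset_closedBall hwj)
    have hjl : j ≠ l := by
      intro h; rw [h] at hwj; exact hwl (ball_subset_closedBall hwj)
    -- combine balls k and l
    set r'R : ℝ := sk + sl with hr'Rdef
    set r' : NNReal := Real.toNNReal r'R with hr'def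
    have hr'coe : (r' : ℝ) = r'R := Real.coe_toNNReal _ (by rw [hr'Rdef]; linarith)
    have hmaxk : (B k).2 ≤ r' := by
      rw [← NNReal.coe_le_coe, hr'coe]
      show sk ≤ r'R
      rw [hr'Rdef]; linarith
    have hmaxl : (B l).2 ≤ r' := by
      rw [← NNReal.coe_le_coe, hr'coe]
      show sl ≤ r'R
      rw [hr'Rdef]; linarith
    have hsum : r' ≤ (B k).2 + (B l).2 := by
      rw [← NNReal.coe_le_coe, hr'coe, NNReal.coe_add]
      show r'R ≤ sk + sl
      rw [hr'Rdef]
    have hinck : ball (ctr B k) (rad B k) ⊆ ball c (r' : ℝ) := by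
      intro y hy
      rw [mem_ball] at hy ⊢
      calc dist y c ≤ dist y (ctr B k) + dist (ctr B k) c := dist_triangle _ _ _
        _ = dist y (ctr B k) + sl := by rw [dist_comm (ctr B k) c, hdck]
        _ < sk + sl := by exact add_lt_add_left hy _
        _ ≤ (r' : ℝ) := by rw [hr'coe, hr'Rdef]
    have hincl : ball (ctr B l) (rad B l) ⊆ ball c (r' : ℝ) := by
      intro y hy
      rw [mem_ball] at hy ⊢
      calc dist y c ≤ dist y (ctr B l) + dist (ctr B l) c := dist_triangle _ _ _
        _ = dist y (ctr B l) + sk := by rw [dist_comm (ctr B l) c, hdcl]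
        _ < sl + sk := by exact add_lt_add_left hy _
        _ ≤ (r' : ℝ) := by rw [hr'coe, hr'Rdef]; linarith
    have hc2 : c = ctr B k + (sl / dst) • (ctr B l - ctr B k) := by
      rw [hcdef, hbl, add_sub_cancel_left, smul_smul, div_mul_cancel₀ _ hd0.ne']
    have hnormle : ‖c‖ ≤ max ‖(B k).1‖ ‖(B l).1‖ := by
      rw [hc2]
      exact norm_segment _ _ _ (div_nonneg hl2.le hd0.le)
        (by rw [div_le_one hd0]; linarith)
    have hnorm := norm_le_muSupA A B hBst c k l hk1 hl1 hnormle
    obtain ⟨B', hB'st, hB'0, hrho, p, hp1, hBp, corresp⟩ :=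
      combASC_spec A B hBst k l hk1 hkl c r' hmaxk hmaxl hsum hinck hincl hnorm
    have hfinB' := Stilde_rho_ne_top A B' hB'st
    have htr := rho_toReal_comb B' B ((B k).2) ((B l).2) r' hrho hfinB
    have hskr : ((B k).2 : ℝ) = sk := rfl
    have hslr : ((B l).2 : ℝ) = sl := rfl
    rw [hskr, hslr, hr'coe] at htr
    have hr0B' : rad B' 0 = rad B 0 := congrArg (fun q => ((q.2 : ℝ) : ℝ)) hB'0
    have hctrp : ctr B' p = c := congrArg Prod.fst hBp
    have hradp : rad B' p = r'R := by
      have h4 : rad B' p = (r' : ℝ) := congrArg (fun q => ((q.2 : ℝ) : ℝ)) hBp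
      rw [h4, hr'coe]
    obtain ⟨j', hj'1, hj'ne, hj'eq⟩ := corresp j hj1 hjk hjl
    have hctrj' : ctr B' j' = ctr B j := congrArg Prod.fst hj'eq
    have hradj' : rad B' j' = rad B j := congrArg (fun q => ((q.2 : ℝ) : ℝ)) hj'eq
    have hj'S : j' ∈ SIdx B' := ⟨hj'1, by rw [hradj']; exact hj2⟩
    have hpS : p ∈ SIdx B' := ⟨hp1, by rw [hradp, hr'Rdef]; linarith⟩
    have hoverlap : dist (ctr B' j') (ctr B' p) < rad B' j' + rad B' p := by
      rw [hctrj', hctrp, hradj', hradp]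
      have t1 : dist (ctr B j) c ≤ dist (ctr B j) w + dist w c := dist_triangle _ _ _
      have t2 : dist (ctr B j) w < rad B j := by rw [dist_comm]; exact mem_ball.1 hwj
      have t3 : dist w c ≤ dist w z + dist z c := dist_triangle _ _ _
      have t4 : dist w z < ε := mem_ball.1 hwz
      rw [hdzc] at t3
      have habs : |sk - sl| + ε ≤ max sk sl := by
        rcases le_total sk sl with h | h
        · rw [abs_of_nonpos (by linarith), max_eq_right h]; linarith
        · rw [abs_of_nonneg (by linarith), max_eq_left h]; linarith
      have hmaxlt : max sk sl < r'R := by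
        rw [hr'Rdef]
        rcases le_total sk sl with h | h
        · rw [max_eq_right h]; linarith
        · rw [max_eq_left h]; linarith
      linarith
    obtain ⟨B'', hB''st, h2⟩ := move_overlap A B' hB'st j' p hj'S hpS hj'ne hoverlap
    have heqd : delta1 B = delta1 B' := by
      rw [delta1_coe B hfinB, delta1_coe B' hfinB']
      have hre : rad B' 0 - (rhoSum B').toReal = rad B 0 - (rhoSum B).toReal := by
        rw [hr0B']
        have : (rhoSum B').toReal = (rhoSum B).toReal := by
          rw [hr'Rdef] at htr; linarith
        rw [this]
      rw [hre]
    exact contra B'' hB''st (heqd ▸ h2)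
  -- assemble
  refine ⟨hBst.1.1.1, ?_, fun k hk => ⟨step3 k hk, fun l hl hlk => ?_⟩⟩
  · have h0 : 0 ≤ (rhoSum B).toReal := ENNReal.toReal_nonneg
    linarith
  · rcases lt_or_gt_of_ne hlk with h | h
    · rw [Set.inter_comm]
      exact step4 l k hl hk h
    · exact step4 k l hk hl h

end
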